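/- Let m ≥ 3 be an odd integer. The elements σ₁ := [i,j] and σ₂ := [e_{2m}·j, j·e₄] both belong to G₂(m), both satisfy σ ∘ σ = id with σ ≠ id (they are involutions), and they are not conjugate in G₂(m): there is no h ∈ G₂(m) with h·σ₁·h⁻¹ = σ₂. Hence G₂(m) has at least two distinct conjugacy classes of order-two elements with nonzero fixed vectors. -/

import Mathlib

noncomputable section

open Quaternion Real

/-- The quaternion `i`. -/
def qi : Quaternion ℝ := ⟨0, 1, 0, 0⟩
/-- The quaternion `j`. -/
def qj : Quaternion ℝ := ⟨0, 0, 1, 0⟩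
/-- The quaternion `k`. -/
def qk : Quaternion ℝ := ⟨0, 0, 0, 1⟩
/-- The unit quaternion `e_s = cos(π/s) + sin(π/s) i`. -/
def es (s : ℕ) : Quaternion ℝ := ⟨Real.cos (Real.pi / s), Real.sin (Real.pi / s), 0, 0⟩

lemma norm_eq_one_of_normSq {a : Quaternion ℝ} (h : Quaternion.normSq a = 1) : ‖a‖ = 1 := by
  have h2 : ‖a‖ * ‖a‖ = 1 := by rw [← Quaternion.normSq_eq_norm_mul_self, h]
  rcases mul_self_eq_one_iff.1 h2 with h' | h'
  · exact h'
  · nlinarith [norm_nonneg a]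

lemma norm_qi : ‖qi‖ = 1 := norm_eq_one_of_normSq (by rw [Quaternion.normSq_def']; simp [qi])
lemma norm_qj : ‖qj‖ = 1 := norm_eq_one_of_normSq (by rw [Quaternion.normSq_def']; simp [qj])
lemma norm_qk : ‖qk‖ = 1 := norm_eq_one_of_normSq (by rw [Quaternion.normSq_def']; simp [qk])
lemma norm_es (s : ℕ) : ‖es s‖ = 1 :=
  norm_eq_one_of_normSq (by
    rw [Quaternion.normSq_def']
    simp only [es]
    simp [Real.sin_sq_add_cos_sq, Real.cos_sq_add_sin_sq])

lemma self_mul_star_of_norm_one {a : Quaternion ℝ} (h : ‖a‖ = 1) : a * star a = 1 := by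
  rw [Quaternion.self_mul_star]
  have h1 : Quaternion.normSq a = 1 := by rw [Quaternion.normSq_eq_norm_mul_self, h, mul_one]
  rw [h1]; norm_num

lemma star_mul_self_of_norm_one {a : Quaternion ℝ} (h : ‖a‖ = 1) : star a * a = 1 := by
  rw [Quaternion.star_mul_self]
  have h1 : Quaternion.normSq a = 1 := by rw [Quaternion.normSq_eq_norm_mul_self, h, mul_one]
  rw [h1]; norm_num

/-- The rotation `[l,r] : x ↦ l̄ x r` of `ℝ⁴ ≅ ℍ`, for unit quaternions `l, r`. -/
def qrot (l r : Quaternion ℝ) (hl : ‖l‖ = 1) (hr : ‖r‖ = 1) :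
    Quaternion ℝ ≃ₗ[ℝ] Quaternion ℝ where
  toFun x := star l * x * r
  invFun x := l * x * star r
  map_add' x y := by noncomm_ring
  map_smul' c x := by simp [mul_smul_comm, smul_mul_assoc]
  left_inv x := by
    have h : l * (star l * x * r) * star r = (l * star l) * x * (r * star r) := by noncomm_ring
    simp [h, self_mul_star_of_norm_one hl, self_mul_star_of_norm_one hr]
  right_inv x := by
    have h : star l * (l * x * star r) * r = (star l * l) * x * (star r * r) := by noncomm_ring
    simp [h, star_mul_self_of_norm_one hl, star_mul_self_of_norm_one hr]

/-- The group `G₁(m)`. -/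
def G1 (m : ℕ) : Subgroup (Quaternion ℝ ≃ₗ[ℝ] Quaternion ℝ) :=
  Subgroup.closure
    {qrot (es m) 1 (norm_es m) norm_one,
     qrot 1 qi norm_one norm_qi,
     qrot 1 qj norm_one norm_qj,
     qrot qj (es 4) norm_qj (norm_es 4)}

/-- The group `G₂(m)`. -/
def G2 (m : ℕ) : Subgroup (Quaternion ℝ ≃ₗ[ℝ] Quaternion ℝ) :=
  Subgroup.closure
    {qrot (es m) 1 (norm_es m) norm_one,
     qrot 1 qi norm_one norm_qi,
     qrot (es (2 * m)) qj (norm_es (2 * m)) norm_qj,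
     qrot qj (es 4) norm_qj (norm_es 4)}

/-- The group `G₃(m)`. -/
def G3 (m : ℕ) : Subgroup (Quaternion ℝ ≃ₗ[ℝ] Quaternion ℝ) :=
  Subgroup.closure
    {qrot (es m) 1 (norm_es m) norm_one,
     qrot 1 qi norm_one norm_qi,
     qrot qj 1 norm_qj norm_one,
     qrot 1 qj norm_one norm_qj}

/-- The group `F₁(m)`. -/
def F1 (m : ℕ) : Subgroup (Quaternion ℝ ≃ₗ[ℝ] Quaternion ℝ) :=
  Subgroup.closure
    {qrot (es m) qi (norm_es m) norm_qi,
     qrot 1 qj norm_one norm_qj}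

/-- The involution `σ₁ = [i, j]`. -/
def sigma1 : Quaternion ℝ ≃ₗ[ℝ] Quaternion ℝ := qrot qi qj norm_qi norm_qj

/-- The involution `σ₂ = [e_{2m}·j, j·e₄]`. -/
def sigma2 (m : ℕ) : Quaternion ℝ ≃ₗ[ℝ] Quaternion ℝ :=
  qrot (es (2 * m) * qj) (qj * es 4)
    (by rw [norm_mul, norm_es, norm_qj, one_mul])
    (by rw [norm_mul, norm_qj, norm_es, one_mul])

/-! ### Auxiliary lemmas -/

section Aux

lemma qrot_apply (l r : Quaternion ℝ) (hl : ‖l‖ = 1) (hr : ‖r‖ = 1) (x : Quaternion ℝ) :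
    qrot l r hl hr x = star l * x * r := rfl

lemma mul_apply' (e f : Quaternion ℝ ≃ₗ[ℝ] Quaternion ℝ) (x : Quaternion ℝ) :
    (e * f) x = e (f x) := rfl

lemma inv_apply' (e : Quaternion ℝ ≃ₗ[ℝ] Quaternion ℝ) (x : Quaternion ℝ) :
    (e⁻¹) x = e.symm x := rfl

lemma one_apply' (x : Quaternion ℝ) : (1 : Quaternion ℝ ≃ₗ[ℝ] Quaternion ℝ) x = x := rfl

lemma lequiv_ext {e f : Quaternion ℝ ≃ₗ[ℝ] Quaternion ℝ} (h : ∀ x, e x = f x) : e = f := by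
  apply DFunLike.ext _ _ h

/-- de Moivre for `es`. -/
lemma es_pow (s : ℕ) (k : ℕ) :
    (es s) ^ k = ⟨Real.cos (k * (Real.pi / s)), Real.sin (k * (Real.pi / s)), 0, 0⟩ := by
  induction k with
  | zero => ext <;> simp
  | succ n ih =>
    rw [pow_succ]
    have h1 : ((n + 1 : ℕ) : ℝ) * (Real.pi / s) = n * (Real.pi / s) + Real.pi / s := by
      push_cast; ring
    rw [h1, Real.cos_add, Real.sin_add]
    ext <;> simp only [Quaternion.re_mul, Quaternion.imI_mul, Quaternion.imJ_mul, Quaternion.imK_mul] <;> rw [ih] <;> simp [es] <;> ring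

lemma es2m_pow (m : ℕ) (hm : 1 ≤ m) : (es (2 * m)) ^ m = qi := by
  have hm0 : (m : ℝ) ≠ 0 := by positivity
  rw [es_pow]
  have h : (m : ℝ) * (Real.pi / ((2 * m : ℕ) : ℝ)) = Real.pi / 2 := by
    push_cast; field_simp
  rw [h]
  ext <;> simp [qi]

lemma esm_pow (m : ℕ) (hm : 1 ≤ m) (t : ℕ) :
    (es m) ^ (m * t) = (((-1 : ℝ) ^ t : ℝ) : Quaternion ℝ) := by
  have hm0 : (m : ℝ) ≠ 0 := by positivity
  rw [es_pow]
  have h : ((m * t : ℕ) : ℝ) * (Real.pi / (m : ℝ)) = 0 + t * Real.pi := by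
    push_cast; field_simp; ring
  rw [h, Real.cos_add_nat_mul_pi, Real.cos_zero, mul_one]
  have h2 : Real.sin (0 + (t : ℝ) * Real.pi) = 0 := by
    rw [zero_add]; exact Real.sin_nat_mul_pi t
  rw [h2]
  ext <;> rfl

lemma qj_sq : qj * qj = -1 := by ext <;> simp <;> simp [qj]
lemma qi_sq : qi * qi = -1 := by ext <;> simp <;> simp [qi]

lemma qj_pow_odd (t : ℕ) : qj ^ (2 * t + 1) = (((-1 : ℝ) ^ t : ℝ) : Quaternion ℝ) * qj := by
  have h2 : qj ^ 2 = -1 := by rw [pow_two, qj_sq]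
  rw [pow_add, pow_mul, h2, pow_one]
  rcases Nat.even_or_odd t with ht | ht
  · rw [ht.neg_one_pow, Even.neg_one_pow (by exact_mod_cast ht)]; simp
  · rw [ht.neg_one_pow, Odd.neg_one_pow (by exact_mod_cast ht)]; simp

lemma qrot_pow (l r : Quaternion ℝ) (hl : ‖l‖ = 1) (hr : ‖r‖ = 1) (n : ℕ) (x : Quaternion ℝ) :
    ((qrot l r hl hr) ^ n) x = star (l ^ n) * x * r ^ n := by
  induction n generalizing x with
  | zero => simp [one_apply']
  | succ k ih =>
    rw [pow_succ, mul_apply', qrot_apply, ih]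
    have hl2 : star (l ^ (k + 1)) = star (l ^ k) * star l := by rw [pow_succ', star_mul]
    have hr2 : r ^ (k + 1) = r * r ^ k := pow_succ' r k
    rw [hl2, hr2]
    noncomm_ring

lemma qrot_inv_apply (l r : Quaternion ℝ) (hl : ‖l‖ = 1) (hr : ‖r‖ = 1) (x : Quaternion ℝ) :
    (qrot l r hl hr)⁻¹ x = l * x * star r := rfl

/-- the set `A = {±i}` of possible left components. -/
def Aset : Set (Quaternion ℝ) := {qi, -qi}
/-- the set `B = {±i, ±j, ±k}` of possible right components. -/
def Bset : Set (Quaternion ℝ) := {qi, -qi, qj, -qj, qk, -qk}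

/-- the conjugation invariant. -/
def Pinv (h : Quaternion ℝ ≃ₗ[ℝ] Quaternion ℝ) : Prop :=
  ∀ a ∈ Aset, ∀ b ∈ Bset, ∃ a' ∈ Aset, ∃ b' ∈ Bset,
    ∀ x, h (star a * x * b) = star a' * h x * b'

lemma Pinv_one : Pinv 1 := by
  intro a ha b hb
  exact ⟨a, ha, b, hb, fun x => by simp [one_apply']⟩

lemma Pinv_mul {h₁ h₂ : Quaternion ℝ ≃ₗ[ℝ] Quaternion ℝ} (p1 : Pinv h₁) (p2 : Pinv h₂) :
    Pinv (h₁ * h₂) := by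
  intro a ha b hb
  obtain ⟨a', ha', b', hb', H2⟩ := p2 a ha b hb
  obtain ⟨a'', ha'', b'', hb'', H1⟩ := p1 a' ha' b' hb'
  exact ⟨a'', ha'', b'', hb'', fun x => by rw [mul_apply', H2, H1, mul_apply']⟩

/-- the subgroup of elements whose conjugation action preserves the invariant set. -/
def Ksub : Subgroup (Quaternion ℝ ≃ₗ[ℝ] Quaternion ℝ) where
  carrier := {h | Pinv h ∧ Pinv h⁻¹}
  one_mem' := ⟨Pinv_one, by rw [inv_one]; exact Pinv_one⟩
  mul_mem' := fun {g1 g2} p q =>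
    ⟨Pinv_mul p.1 q.1, by rw [mul_inv_rev]; exact Pinv_mul q.2 p.2⟩
  inv_mem' := fun {g} p => ⟨p.2, by rw [inv_inv]; exact p.1⟩

lemma star_conj_star (l a : Quaternion ℝ) : star (star l * a * l) = star l * star a * l := by
  simp [star_mul, mul_assoc]

lemma Pinv_qrot (l r : Quaternion ℝ) (hl : ‖l‖ = 1) (hr : ‖r‖ = 1)
    (Hl : ∀ a ∈ Aset, star l * a * l ∈ Aset) (Hr : ∀ b ∈ Bset, star r * b * r ∈ Bset) :
    Pinv (qrot l r hl hr) := by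
  intro a ha b hb
  refine ⟨star l * a * l, Hl a ha, star r * b * r, Hr b hb, fun x => ?_⟩
  rw [qrot_apply, qrot_apply, star_conj_star]
  have h1 : ∀ y : Quaternion ℝ, l * (star l * y) = y := fun y => by
    rw [← mul_assoc, self_mul_star_of_norm_one hl, one_mul]
  have h2 : ∀ y : Quaternion ℝ, r * (star r * y) = y := fun y => by
    rw [← mul_assoc, self_mul_star_of_norm_one hr, one_mul]
  calc star l * (star a * x * b) * r
      = star l * star a * (l * (star l * (x * (r * (star r * (b * r)))))) := by
        rw [h1, h2]; noncomm_ring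
    _ = star l * star a * l * (star l * x * r) * (star r * b * r) := by noncomm_ring

lemma Pinv_qrot_inv (l r : Quaternion ℝ) (hl : ‖l‖ = 1) (hr : ‖r‖ = 1)
    (Hl : ∀ a ∈ Aset, l * a * star l ∈ Aset) (Hr : ∀ b ∈ Bset, r * b * star r ∈ Bset) :
    Pinv (qrot l r hl hr)⁻¹ := by
  have hl' : ‖star l‖ = 1 := by rwa [norm_star]
  have hr' : ‖star r‖ = 1 := by rwa [norm_star]
  have key : (qrot l r hl hr)⁻¹ = qrot (star l) (star r) hl' hr' := by
    apply lequiv_ext; intro x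
    rw [qrot_inv_apply, qrot_apply, star_star]
  rw [key]
  apply Pinv_qrot
  · intro a ha; have := Hl a ha; rwa [star_star]
  · intro b hb; have := Hr b hb; rwa [star_star]

lemma neg_mem_Aset {a : Quaternion ℝ} (h : a ∈ Aset) : -a ∈ Aset := by
  simp only [Aset, Set.mem_insert_iff, Set.mem_singleton_iff] at h ⊢
  rcases h with rfl | rfl <;> simp

lemma neg_mem_Bset {b : Quaternion ℝ} (h : b ∈ Bset) : -b ∈ Bset := by
  simp only [Bset, Set.mem_insert_iff, Set.mem_singleton_iff] at h ⊢
  rcases h with rfl | rfl | rfl | rfl | rfl | rfl <;> simp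

lemma conj_Aset_of (l : Quaternion ℝ) (h : star l * qi * l ∈ Aset) :
    ∀ a ∈ Aset, star l * a * l ∈ Aset := by
  rintro a (rfl | rfl)
  · exact h
  · have : star l * -qi * l = -(star l * qi * l) := by noncomm_ring
    rw [this]; exact neg_mem_Aset h

lemma conj_Bset_of (r : Quaternion ℝ) (h1 : star r * qi * r ∈ Bset)
    (h2 : star r * qj * r ∈ Bset) (h3 : star r * qk * r ∈ Bset) :
    ∀ b ∈ Bset, star r * b * r ∈ Bset := by
  rintro b (rfl | rfl | rfl | rfl | rfl | rfl)
  · exact h1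
  · have : star r * -qi * r = -(star r * qi * r) := by noncomm_ring
    rw [this]; exact neg_mem_Bset h1
  · exact h2
  · have : star r * -qj * r = -(star r * qj * r) := by noncomm_ring
    rw [this]; exact neg_mem_Bset h2
  · exact h3
  · have : star r * -qk * r = -(star r * qk * r) := by noncomm_ring
    rw [this]; exact neg_mem_Bset h3

end Aux

section Aux2

lemma conj_Aset_of' (l : Quaternion ℝ) (h : l * qi * star l ∈ Aset) :
    ∀ a ∈ Aset, l * a * star l ∈ Aset := by
  rintro a (rfl | rfl)
  · exact h
  · have : l * -qi * star l = -(l * qi * star l) := by noncomm_ring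
    rw [this]; exact neg_mem_Aset h

lemma conj_Bset_of' (r : Quaternion ℝ) (h1 : r * qi * star r ∈ Bset)
    (h2 : r * qj * star r ∈ Bset) (h3 : r * qk * star r ∈ Bset) :
    ∀ b ∈ Bset, r * b * star r ∈ Bset := by
  rintro b (rfl | rfl | rfl | rfl | rfl | rfl)
  · exact h1
  · have : r * -qi * star r = -(r * qi * star r) := by noncomm_ring
    rw [this]; exact neg_mem_Bset h1
  · exact h2
  · have : r * -qj * star r = -(r * qj * star r) := by noncomm_ring
    rw [this]; exact neg_mem_Bset h2
  · exact h3
  · have : r * -qk * star r = -(r * qk * star r) := by noncomm_ring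
    rw [this]; exact neg_mem_Bset h3

end Aux2

section Conj

lemma es4c : Real.cos (Real.pi / (4 : ℕ)) = Real.sqrt 2 / 2 := by
  norm_num [Real.cos_pi_div_four]
lemma es4s : Real.sin (Real.pi / (4 : ℕ)) = Real.sqrt 2 / 2 := by
  norm_num [Real.sin_pi_div_four]
lemma sq2 : Real.sqrt 2 * Real.sqrt 2 = 2 := Real.mul_self_sqrt (by norm_num)

lemma es_conj_qi (s : ℕ) : star (es s) * qi * es s = qi := by
  have h := Real.sin_sq_add_cos_sq (Real.pi / s)
  ext <;> simp <;> simp [qi, es] <;> nlinarith [h]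

lemma es_conj_qi' (s : ℕ) : es s * qi * star (es s) = qi := by
  have h := Real.sin_sq_add_cos_sq (Real.pi / s)
  ext <;> simp <;> simp [qi, es] <;> nlinarith [h]

lemma qj_conj_qi : star qj * qi * qj = -qi := by ext <;> simp <;> simp [qi, qj]
lemma qj_conj_qi' : qj * qi * star qj = -qi := by ext <;> simp <;> simp [qi, qj]
lemma one_conj_qi : star (1 : Quaternion ℝ) * qi * 1 = qi := by simp
lemma qi_conj_qi : star qi * qi * qi = qi := by ext <;> simp <;> simp [qi]
lemma qi_conj_qj : star qi * qj * qi = -qj := by ext <;> simp <;> simp [qi, qj]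
lemma qi_conj_qk : star qi * qk * qi = -qk := by ext <;> simp <;> simp [qi, qk]
lemma qj_conj_qj : star qj * qj * qj = qj := by ext <;> simp <;> simp [qj]
lemma qj_conj_qk : star qj * qk * qj = -qk := by ext <;> simp <;> simp [qj, qk]
lemma qi_conj_qi' : qi * qi * star qi = qi := by ext <;> simp <;> simp [qi]
lemma qi_conj_qj' : qi * qj * star qi = -qj := by ext <;> simp <;> simp [qi, qj]
lemma qi_conj_qk' : qi * qk * star qi = -qk := by ext <;> simp <;> simp [qi, qk]
lemma qj_conj_qj' : qj * qj * star qj = qj := by ext <;> simp <;> simp [qj]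
lemma qj_conj_qk' : qj * qk * star qj = -qk := by ext <;> simp <;> simp [qj, qk]

lemma es4_conj_qi : star (es 4) * qi * es 4 = qi := es_conj_qi 4
lemma es4_conj_qi' : es 4 * qi * star (es 4) = qi := es_conj_qi' 4
lemma es4_conj_qj : star (es 4) * qj * es 4 = -qk := by
  ext <;> simp <;> simp [qj, qk, es, es4c, es4s] <;> nlinarith [sq2]
lemma es4_conj_qk : star (es 4) * qk * es 4 = qj := by
  ext <;> simp <;> simp [qj, qk, es, es4c, es4s] <;> nlinarith [sq2]
lemma es4_conj_qj' : es 4 * qj * star (es 4) = qk := by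
  ext <;> simp <;> simp [qj, qk, es, es4c, es4s] <;> nlinarith [sq2]
lemma es4_conj_qk' : es 4 * qk * star (es 4) = -qj := by
  ext <;> simp <;> simp [qj, qk, es, es4c, es4s] <;> nlinarith [sq2]

lemma mem_A_qi : qi ∈ Aset := by simp [Aset]
lemma mem_A_nqi : -qi ∈ Aset := by simp [Aset]
lemma mem_B_qi : qi ∈ Bset := by simp [Bset]
lemma mem_B_nqi : -qi ∈ Bset := by simp [Bset]
lemma mem_B_qj : qj ∈ Bset := by simp [Bset]
lemma mem_B_nqj : -qj ∈ Bset := by simp [Bset]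
lemma mem_B_qk : qk ∈ Bset := by simp [Bset]
lemma mem_B_nqk : -qk ∈ Bset := by simp [Bset]

/-- all four generators of `G₂(m)` lie in `Ksub`. -/
lemma G2_le_Ksub (m : ℕ) : G2 m ≤ Ksub := by
  rw [G2, Subgroup.closure_le]
  rintro g (rfl | rfl | rfl | rfl)
  · constructor
    · exact Pinv_qrot _ _ _ _ (conj_Aset_of _ (by rw [es_conj_qi]; exact mem_A_qi))
        (conj_Bset_of _ (by simpa using mem_B_qi) (by simpa using mem_B_qj)
          (by simpa using mem_B_qk))
    · exact Pinv_qrot_inv _ _ _ _ (conj_Aset_of' _ (by rw [es_conj_qi']; exact mem_A_qi))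
        (conj_Bset_of' _ (by simpa using mem_B_qi) (by simpa using mem_B_qj)
          (by simpa using mem_B_qk))
  · constructor
    · exact Pinv_qrot _ _ _ _ (conj_Aset_of _ (by simpa using mem_A_qi))
        (conj_Bset_of _ (by rw [qi_conj_qi]; exact mem_B_qi)
          (by rw [qi_conj_qj]; exact mem_B_nqj) (by rw [qi_conj_qk]; exact mem_B_nqk))
    · exact Pinv_qrot_inv _ _ _ _ (conj_Aset_of' _ (by simpa using mem_A_qi))
        (conj_Bset_of' _ (by rw [qi_conj_qi']; exact mem_B_qi)
          (by rw [qi_conj_qj']; exact mem_B_nqj) (by rw [qi_conj_qk']; exact mem_B_nqk))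
  · constructor
    · exact Pinv_qrot _ _ _ _ (conj_Aset_of _ (by rw [es_conj_qi]; exact mem_A_qi))
        (conj_Bset_of _ (by rw [qj_conj_qi]; exact mem_B_nqi)
          (by rw [qj_conj_qj]; exact mem_B_qj) (by rw [qj_conj_qk]; exact mem_B_nqk))
    · exact Pinv_qrot_inv _ _ _ _ (conj_Aset_of' _ (by rw [es_conj_qi']; exact mem_A_qi))
        (conj_Bset_of' _ (by rw [qj_conj_qi']; exact mem_B_nqi)
          (by rw [qj_conj_qj']; exact mem_B_qj) (by rw [qj_conj_qk']; exact mem_B_nqk))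
  · constructor
    · exact Pinv_qrot _ _ _ _ (conj_Aset_of _ (by rw [qj_conj_qi]; exact mem_A_nqi))
        (conj_Bset_of _ (by rw [es4_conj_qi]; exact mem_B_qi)
          (by rw [es4_conj_qj]; exact mem_B_nqk) (by rw [es4_conj_qk]; exact mem_B_qj))
    · exact Pinv_qrot_inv _ _ _ _ (conj_Aset_of' _ (by rw [qj_conj_qi']; exact mem_A_nqi))
        (conj_Bset_of' _ (by rw [es4_conj_qi']; exact mem_B_qi)
          (by rw [es4_conj_qj']; exact mem_B_qk) (by rw [es4_conj_qk']; exact mem_B_nqj))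

end Conj

section Main

lemma qj_es_qj (s : ℕ) : qj * es s * qj = -star (es s) := by
  ext <;> simp <;> simp [qj, es]

lemma star_qi_sq : star qi * star qi = -1 := by ext <;> simp <;> simp [qi]

lemma sigma1_invol : sigma1 * sigma1 = 1 := by
  apply lequiv_ext; intro x
  rw [mul_apply', one_apply']
  show star qi * (star qi * x * qj) * qj = x
  have h : star qi * (star qi * x * qj) * qj = star qi * star qi * x * (qj * qj) := by
    noncomm_ring
  rw [h, star_qi_sq, qj_sq]
  noncomm_ring

lemma A0_sq (m : ℕ) : (es (2 * m) * qj) * (es (2 * m) * qj) = -1 := by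
  have h : (es (2 * m) * qj) * (es (2 * m) * qj) = es (2 * m) * (qj * es (2 * m) * qj) := by
    noncomm_ring
  rw [h, qj_es_qj, mul_neg, self_mul_star_of_norm_one (norm_es (2 * m))]

lemma B0_sq : (qj * es 4) * (qj * es 4) = -1 := by
  have h : (qj * es 4) * (qj * es 4) = (qj * es 4 * qj) * es 4 := by noncomm_ring
  rw [h, qj_es_qj, neg_mul, star_mul_self_of_norm_one (norm_es 4)]

lemma sigma2_invol (m : ℕ) : sigma2 m * sigma2 m = 1 := by
  apply lequiv_ext; intro x
  rw [mul_apply', one_apply']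
  show star (es (2*m) * qj) * (star (es (2*m) * qj) * x * (qj * es 4)) * (qj * es 4) = x
  have h : star (es (2*m) * qj) * (star (es (2*m) * qj) * x * (qj * es 4)) * (qj * es 4)
      = star (es (2*m) * qj) * star (es (2*m) * qj) * x * ((qj * es 4) * (qj * es 4)) := by
    noncomm_ring
  rw [h, ← star_mul, A0_sq, B0_sq, star_neg, star_one]
  noncomm_ring

lemma sigma1_ne_one : sigma1 ≠ 1 := by
  intro h
  have h1 := DFunLike.congr_fun h 1
  rw [one_apply'] at h1
  have h2 : (sigma1 1).imK = -1 := by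
    show (star qi * 1 * qj).imK = -1
    simp <;> simp [qi, qj]
  rw [h1] at h2
  norm_num at h2

lemma two_m_cast (m : ℕ) : ((2 * m : ℕ) : ℝ) = 2 * m := by push_cast; ring

lemma cos_2m_pos (m : ℕ) (hm : 3 ≤ m) : 0 < Real.cos (Real.pi / ((2 * m : ℕ) : ℝ)) := by
  apply Real.cos_pos_of_mem_Ioo
  rw [two_m_cast]
  have hm' : (2 : ℝ) < 2 * m := by
    have : (3 : ℝ) ≤ m := by exact_mod_cast hm
    linarith
  constructor
  · have : 0 < Real.pi / (2 * m) := by positivity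
    linarith [Real.pi_pos]
  · exact div_lt_div_of_pos_left Real.pi_pos (by norm_num) hm'

lemma sin_2m_nonneg (m : ℕ) (hm : 3 ≤ m) : 0 ≤ Real.sin (Real.pi / ((2 * m : ℕ) : ℝ)) := by
  apply Real.sin_nonneg_of_nonneg_of_le_pi
  · rw [two_m_cast]; positivity
  · rw [two_m_cast]
    have hm' : (1 : ℝ) ≤ 2 * m := by
      have : (3 : ℝ) ≤ m := by exact_mod_cast hm
      linarith
    exact div_le_self Real.pi_pos.le hm'

lemma sin_2m_pos (m : ℕ) (hm : 3 ≤ m) : 0 < Real.sin (Real.pi / ((2 * m : ℕ) : ℝ)) := by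
  apply Real.sin_pos_of_pos_of_lt_pi
  · rw [two_m_cast]
    have : (3 : ℝ) ≤ m := by exact_mod_cast hm
    positivity
  · rw [two_m_cast]
    have hm' : (1 : ℝ) < 2 * m := by
      have : (3 : ℝ) ≤ m := by exact_mod_cast hm
      linarith
    exact div_lt_self Real.pi_pos hm'

lemma sigma2_one_imI (m : ℕ) (hm : 3 ≤ m) : 0 < (sigma2 m 1).imI := by
  have h : (sigma2 m 1).imI =
      Real.cos (Real.pi / ((2 * m : ℕ) : ℝ)) * (Real.sqrt 2 / 2)
      + Real.sin (Real.pi / ((2 * m : ℕ) : ℝ)) * (Real.sqrt 2 / 2) := by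
    show (star (es (2 * m) * qj) * 1 * (qj * es 4)).imI = _
    simp <;> simp [qj, es, es4c, es4s]
  rw [h]
  have hs2 : 0 < Real.sqrt 2 / 2 := by positivity
  nlinarith [mul_pos (cos_2m_pos m hm) hs2, mul_nonneg (sin_2m_nonneg m hm) hs2.le]

lemma sigma2_ne_one (m : ℕ) (hm : 3 ≤ m) : sigma2 m ≠ 1 := by
  intro h
  have h1 := DFunLike.congr_fun h 1
  rw [one_apply'] at h1
  have h2 := sigma2_one_imI m hm
  rw [h1] at h2
  simp at h2

lemma sigma1_fixed : ∃ x : Quaternion ℝ, x ≠ 0 ∧ sigma1 x = x := by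
  have hv : sigma1 (qi + qj) = qi + qj := by
    show star qi * (qi + qj) * qj = qi + qj
    ext <;> simp <;> simp [qi, qj]
  refine ⟨qi + qj, ?_, hv⟩
  intro h
  have h1 : (qi + qj).imI = 0 := by rw [h]; simp
  rw [Quaternion.imI_add] at h1
  simp [qi, qj] at h1

lemma sigma2_fixed (m : ℕ) (hm : 3 ≤ m) : ∃ x : Quaternion ℝ, x ≠ 0 ∧ sigma2 m x = x := by
  refine ⟨1 + sigma2 m 1, ?_, ?_⟩
  · intro h
    have h1 : (1 + sigma2 m 1).imI = 0 := by rw [h]; simp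
    rw [Quaternion.imI_add] at h1
    have h2 := sigma2_one_imI m hm
    simp [Quaternion.imI_one] at h1
    linarith
  · rw [map_add]
    have h1 : sigma2 m (sigma2 m 1) = 1 := by
      have := DFunLike.congr_fun (sigma2_invol m) 1
      rw [one_apply'] at this
      rw [← mul_apply']
      exact this
    rw [h1, add_comm]

lemma sigma2_mem (m : ℕ) : sigma2 m ∈ G2 m := by
  have key : sigma2 m = qrot qj (es 4) norm_qj (norm_es 4) *
      qrot (es (2 * m)) qj (norm_es (2 * m)) norm_qj := by
    apply lequiv_ext; intro x
    rw [mul_apply', qrot_apply, qrot_apply]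
    show star (es (2 * m) * qj) * x * (qj * es 4) = _
    rw [star_mul]
    noncomm_ring
  rw [key, G2]
  exact mul_mem (Subgroup.subset_closure (by simp)) (Subgroup.subset_closure (by simp))

lemma sigma1_mem (m : ℕ) (hm : 3 ≤ m) (hodd : Odd m) : sigma1 ∈ G2 m := by
  obtain ⟨t, ht⟩ := hodd
  have hm1 : 1 ≤ m := by omega
  have key : sigma1 = (qrot (es (2 * m)) qj (norm_es (2 * m)) norm_qj) ^ m *
      (qrot (es m) 1 (norm_es m) norm_one) ^ (m * t) := by
    apply lequiv_ext; intro x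
    rw [mul_apply', qrot_pow, qrot_pow, es2m_pow m hm1, one_pow, mul_one, esm_pow m hm1 t]
    have hqj : qj ^ m = (((-1 : ℝ) ^ t : ℝ) : Quaternion ℝ) * qj := by
      rw [ht]; exact qj_pow_odd t
    rw [hqj, Quaternion.star_coe]
    set c : ℝ := (-1 : ℝ) ^ t with hc
    have hcc : c * c = 1 := by
      rw [hc, ← pow_add]
      exact Even.neg_one_pow ⟨t, rfl⟩
    rw [Quaternion.coe_mul_eq_smul, Quaternion.coe_mul_eq_smul]
    simp only [smul_mul_assoc, mul_smul_comm, smul_smul, hcc, one_smul]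
    rfl
  rw [key, G2]
  exact mul_mem (pow_mem (Subgroup.subset_closure (by simp)) m)
    (pow_mem (Subgroup.subset_closure (by simp)) (m * t))

lemma Bset_unit : ∀ b ∈ Bset, b * star b = 1 := by
  have hn : ∀ u : Quaternion ℝ, u * star u = 1 → -u * star (-u) = 1 := by
    intro u h; rw [star_neg, neg_mul_neg]; exact h
  rintro b (rfl | rfl | rfl | rfl | rfl | rfl)
  · exact self_mul_star_of_norm_one norm_qi
  · exact hn _ (self_mul_star_of_norm_one norm_qi)
  · exact self_mul_star_of_norm_one norm_qj
  · exact hn _ (self_mul_star_of_norm_one norm_qj)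
  · exact self_mul_star_of_norm_one norm_qk
  · exact hn _ (self_mul_star_of_norm_one norm_qk)

lemma not_conjugate (m : ℕ) (hm : 3 ≤ m) :
    ¬∃ h ∈ G2 m, h * sigma1 * h⁻¹ = sigma2 m := by
  rintro ⟨h, hG, heq⟩
  have hK := G2_le_Ksub m hG
  obtain ⟨a', ha', b', hb', H⟩ := hK.1 qi mem_A_qi qj mem_B_qj
  set A0 : Quaternion ℝ := es (2 * m) * qj with hA0
  set B0 : Quaternion ℝ := qj * es 4 with hB0
  have key : ∀ y, star A0 * y * B0 = star a' * y * b' := by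
    intro y
    calc star A0 * y * B0 = sigma2 m y := rfl
      _ = (h * sigma1 * h⁻¹) y := by rw [heq]
      _ = h (star qi * (h⁻¹ y) * qj) := rfl
      _ = star a' * h (h⁻¹ y) * b' := H _
      _ = star a' * y * b' := by rw [inv_apply', h.apply_symm_apply]
  have hA0n : ‖A0‖ = 1 := by rw [hA0, norm_mul, norm_es, norm_qj, one_mul]
  have hA : A0 * star A0 = 1 := self_mul_star_of_norm_one hA0n
  have hb : b' * star b' = 1 := Bset_unit b' hb'
  set p : Quaternion ℝ := A0 * star a' with hp
  set q : Quaternion ℝ := B0 * star b' with hq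
  have key2 : ∀ y, y * q = p * y := by
    intro y
    have h1 := congrArg (fun z => A0 * z * star b') (key y)
    calc y * q = A0 * star A0 * y * (B0 * star b') := by rw [hA]; noncomm_ring
      _ = A0 * (star A0 * y * B0) * star b' := by noncomm_ring
      _ = A0 * (star a' * y * b') * star b' := by rw [key y]
      _ = (A0 * star a') * y * (b' * star b') := by noncomm_ring
      _ = p * y := by rw [hb, hp]; noncomm_ring
  have hpq : q = p := by have := key2 1; simpa using this
  have hcomm : qi * p = p * qi := by have := key2 qi; rwa [hpq] at this
  -- commuting with qi forces imJ = 0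
  have himJ : p.imJ = 0 := by
    have h1 := congrArg QuaternionAlgebra.imK hcomm
    simp [Quaternion.imK_mul] at h1; simp [qi] at h1
    linarith
  -- but p = A0 * star (±qi) has imJ = ∓ sin(π/(2m)) ≠ 0
  have hsin := sin_2m_pos m hm
  rcases ha' with rfl | rfl
  · have h2 : p.imJ = -Real.sin (Real.pi / ((2 * m : ℕ) : ℝ)) := by
      rw [hp, hA0]
      simp <;> simp [qi, qj, es]
    rw [h2] at himJ
    linarith
  · have h2 : p.imJ = Real.sin (Real.pi / ((2 * m : ℕ) : ℝ)) := by
      rw [hp, hA0]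
      simp <;> simp [qi, qj, es]
    rw [h2] at himJ
    linarith

end Main


/-- In `G₂(m)` the involutions `σ₁ = [i,j]` and `σ₂ = [e_{2m}j, je₄]` both have
nonzero fixed vectors but are not conjugate, so `G₂(m)` has at least two
conjugacy classes of order-two elements with nonzero fixed vectors. -/
theorem G2_two_isotropy_classes (m : ℕ) (hm : 3 ≤ m) (hodd : Odd m) :
    sigma1 ∈ G2 m ∧ sigma2 m ∈ G2 m ∧
    sigma1 * sigma1 = 1 ∧ sigma1 ≠ 1 ∧
    sigma2 m * sigma2 m = 1 ∧ sigma2 m ≠ 1 ∧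
    (∃ x : Quaternion ℝ, x ≠ 0 ∧ sigma1 x = x) ∧
    (∃ x : Quaternion ℝ, x ≠ 0 ∧ sigma2 m x = x) ∧
    ¬∃ h ∈ G2 m, h * sigma1 * h⁻¹ = sigma2 m := by
    refine ⟨sigma1_mem m hm hodd, sigma2_mem m, sigma1_invol, sigma1_ne_one,
    sigma2_invol m, sigma2_ne_one m hm, sigma1_fixed, sigma2_fixed m hm,
    not_conjugate m hm⟩
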